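/- arXiv:1505.05313 — 3 statements merged into one kernel-verified Lean document; each statement's English description precedes it below -/
import Mathlib

section
/- For a, m > 0, c ≠ 0, and j > min_{(0, a²/m)} g, where g(v) = m(1+v²)/v + (1/2)(mc/(mv − a²))², the equation g(v) = j has at least two solutions in the interval (0, a²/m). -/
/-- For a, m > 0, c ≠ 0 and j above the minimum of g on (0, a²/m), the equation
g(v) = j has at least two solutions in (0, a²/m). -/
theorem stmt_4 (a m c j : ℝ) (ha : 0 < a) (hm : 0 < m) (hc : c ≠ 0) (g : ℝ → ℝ)
    (hg : ∀ v, g v = m * (1 + v ^ 2) / v + (1 / 2) * (m * c / (m * v - a ^ 2)) ^ 2)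
    (hj : sInf (g '' Set.Ioo 0 (a ^ 2 / m)) < j) :
    ∃ v₁ ∈ Set.Ioo 0 (a ^ 2 / m), ∃ v₂ ∈ Set.Ioo 0 (a ^ 2 / m),
      v₁ ≠ v₂ ∧ g v₁ = j ∧ g v₂ = j := by
  set b : ℝ := a ^ 2 / m with hbdef
  have hb : 0 < b := by positivity
  have hmb : m * b = a ^ 2 := by rw [hbdef]; field_simp
  -- positivity of g on the interval
  have hgnn : ∀ v ∈ Set.Ioo 0 b, 0 < g v := by
    intro v hv
    rw [hg v]
    have h1 : 0 < m * (1 + v ^ 2) / v := by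
      apply div_pos (by nlinarith [sq_nonneg v] : (0:ℝ) < m * (1 + v ^ 2)) hv.1
    have h2 : 0 ≤ (1 / 2 : ℝ) * (m * c / (m * v - a ^ 2)) ^ 2 := by positivity
    linarith
  -- get v₀ with g v₀ < j
  have hne : (g '' Set.Ioo 0 b).Nonempty := ⟨g (b/2), ⟨b/2, ⟨by linarith, by linarith⟩, rfl⟩⟩
  have hbdd : BddBelow (g '' Set.Ioo 0 b) := by
    refine ⟨0, ?_⟩
    rintro x ⟨v, hv, rfl⟩
    exact (hgnn v hv).le
  obtain ⟨x, ⟨v₀, hv₀, rfl⟩, hx⟩ := (csInf_lt_iff hbdd hne).mp hj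
  have hj0 : 0 < j := lt_trans (hgnn v₀ hv₀) hx
  -- left point ε
  set ε : ℝ := min (v₀ / 2) (m / j) with hεdef
  have hε0 : 0 < ε := lt_min (by linarith [hv₀.1]) (by positivity)
  have hεv₀ : ε < v₀ := lt_of_le_of_lt (min_le_left _ _) (by linarith [hv₀.1])
  have hgε : j ≤ g ε := by
    rw [hg ε]
    have hεm : ε ≤ m / j := min_le_right _ _
    have h1 : j ≤ m / ε := by
      rw [le_div_iff₀ hε0]
      calc j * ε ≤ j * (m / j) := by nlinarith
        _ = m := by field_simp
    have h2 : m / ε ≤ m * (1 + ε ^ 2) / ε := by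
      gcongr
      nlinarith [sq_nonneg ε]
    have h3 : 0 ≤ (1 / 2 : ℝ) * (m * c / (m * ε - a ^ 2)) ^ 2 := by positivity
    linarith
  -- right point δ
  set K : ℝ := |m * c| / Real.sqrt (2 * j) with hKdef
  have hK0 : 0 < K := by
    apply div_pos (abs_pos.mpr (by positivity)) (Real.sqrt_pos.mpr (by linarith))
  have hKsq : K ^ 2 = (m * c) ^ 2 / (2 * j) := by
    rw [hKdef, div_pow, sq_abs, Real.sq_sqrt (by linarith : (0:ℝ) ≤ 2 * j)]
  set d : ℝ := min ((b - v₀) / 2) (K / m) with hddef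
  have hd0 : 0 < d := lt_min (by linarith [hv₀.2]) (by positivity)
  set δ : ℝ := b - d with hδdef
  have hδb : δ < b := by simp [hδdef]; linarith
  have hv₀δ : v₀ < δ := by
    have : d ≤ (b - v₀) / 2 := min_le_left _ _
    simp only [hδdef]; linarith [hv₀.2]
  have hgδ : j ≤ g δ := by
    rw [hg δ]
    have hmd : m * d ≤ K := by
      have : d ≤ K / m := min_le_right _ _
      calc m * d ≤ m * (K / m) := by nlinarith
        _ = K := by field_simp
    have hden : m * δ - a ^ 2 = -(m * d) := by
      rw [hδdef]; linear_combination hmb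
    have hkey : 2 * j * (m * d) ^ 2 ≤ (m * c) ^ 2 := by
      have h1 : (m * d) ^ 2 ≤ K ^ 2 := pow_le_pow_left₀ (by positivity) hmd 2
      rw [hKsq] at h1
      have h2 := (le_div_iff₀ (by linarith : (0:ℝ) < 2 * j)).mp h1
      linear_combination h2
    have h2 : j ≤ (1 / 2 : ℝ) * (m * c / (m * δ - a ^ 2)) ^ 2 := by
      rw [hden, div_pow, neg_sq]
      have hmd2 : 0 < (m * d) ^ 2 := by positivity
      have hq : 2 * j ≤ (m * c) ^ 2 / (m * d) ^ 2 := (le_div_iff₀ hmd2).mpr (by nlinarith)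
      linarith
    have h1 : 0 ≤ m * (1 + δ ^ 2) / δ := by
      apply div_nonneg (by nlinarith [sq_nonneg δ]) (by linarith [hv₀.1])
    linarith
  -- continuity
  have hcont : ContinuousOn g (Set.Ioo 0 b) := by
    have hgeq : g = fun v => m * (1 + v ^ 2) / v + (1 / 2) * (m * c / (m * v - a ^ 2)) ^ 2 :=
      funext hg
    rw [hgeq]
    have c1 : Continuous fun v : ℝ => m * (1 + v ^ 2) :=
      continuous_const.mul (continuous_const.add (continuous_pow 2))
    have c2 : Continuous fun v : ℝ => m * v - a ^ 2 :=
      (continuous_const.mul continuous_id).sub continuous_const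
    have hne' : ∀ x ∈ Set.Ioo 0 b, m * x - a ^ 2 ≠ 0 := by
      intro x hx
      have : m * x < a ^ 2 := by
        calc m * x < m * b := by nlinarith [hx.2]
          _ = a ^ 2 := hmb
      linarith
    exact (c1.continuousOn.div continuousOn_id fun x hx => ne_of_gt hx.1).add
      (continuousOn_const.mul ((continuousOn_const.div c2.continuousOn hne').pow 2))
  have hsub1 : Set.Icc ε v₀ ⊆ Set.Ioo 0 b := fun x hx =>
    ⟨lt_of_lt_of_le hε0 hx.1, lt_of_le_of_lt hx.2 (lt_trans hv₀δ hδb)⟩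
  have hsub2 : Set.Icc v₀ δ ⊆ Set.Ioo 0 b := fun x hx =>
    ⟨lt_of_lt_of_le hv₀.1 hx.1, lt_of_le_of_lt hx.2 hδb⟩
  have h1 := intermediate_value_Icc' (le_of_lt hεv₀) (hcont.mono hsub1)
  have h2 := intermediate_value_Icc (le_of_lt hv₀δ) (hcont.mono hsub2)
  obtain ⟨v₁, hv₁, hgv₁⟩ := h1 ⟨le_of_lt hx, hgε⟩
  obtain ⟨v₂, hv₂, hgv₂⟩ := h2 ⟨le_of_lt hx, hgδ⟩
  have hv₁lt : v₁ < v₀ := lt_of_le_of_ne hv₁.2 (fun h => by rw [h] at hgv₁; linarith)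
  have hv₂gt : v₀ < v₂ := lt_of_le_of_ne' hv₂.1 (fun h => by rw [h] at hgv₂; linarith)
  exact ⟨v₁, hsub1 hv₁, v₂, hsub2 hv₂, by linarith, hgv₁, hgv₂⟩
end

section
/- For a, m > 0, c ≠ 0, and j > min_{(a²/m, ∞)} g, where g(v) = m(1+v²)/v + (1/2)(mc/(mv − a²))², the equation g(v) = j has at least two solutions in the interval (a²/m, ∞). -/
/-- For a, m > 0, c ≠ 0 and j above the minimum of g on (a²/m, ∞), the equation
g(v) = j has at least two solutions in (a²/m, ∞). -/
theorem stmt_5 (a m c j : ℝ) (ha : 0 < a) (hm : 0 < m) (hc : c ≠ 0) (g : ℝ → ℝ)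
    (hg : ∀ v, g v = m * (1 + v ^ 2) / v + (1 / 2) * (m * c / (m * v - a ^ 2)) ^ 2)
    (hj : sInf (g '' Set.Ioi (a ^ 2 / m)) < j) :
    ∃ v₁ ∈ Set.Ioi (a ^ 2 / m), ∃ v₂ ∈ Set.Ioi (a ^ 2 / m),
      v₁ ≠ v₂ ∧ g v₁ = j ∧ g v₂ = j := by
  set L := a ^ 2 / m with hLdef
  have hL : 0 < L := div_pos (pow_pos ha 2) hm
  have hmL : m * L = a ^ 2 := by rw [hLdef]; field_simp
  have hvpos : ∀ v ∈ Set.Ioi L, 0 < v := fun v hv => lt_trans hL hv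
  have hden : ∀ v ∈ Set.Ioi L, 0 < m * v - a ^ 2 := by
    intro v hv
    have : a ^ 2 < v * m := (div_lt_iff₀ hm).mp hv
    linarith
  -- continuity of g on Ioi L
  have hcont : ContinuousOn g (Set.Ioi L) := by
    have hgeq : g = fun v => m * (1 + v ^ 2) / v + (1 / 2) * (m * c / (m * v - a ^ 2)) ^ 2 :=
      funext hg
    rw [hgeq]
    apply ContinuousOn.add
    · exact ContinuousOn.div (by fun_prop) continuousOn_id
        (fun v hv => ne_of_gt (hvpos v hv))
    · apply ContinuousOn.mul continuousOn_const
      apply ContinuousOn.pow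
      exact ContinuousOn.div (by fun_prop) (by fun_prop)
        (fun v hv => ne_of_gt (hden v hv))
  -- there exists a point with value < j
  obtain ⟨v₀, hv₀mem, hv₀⟩ : ∃ v₀ ∈ Set.Ioi L, g v₀ < j := by
    by_contra h
    push_neg at h
    have : j ≤ sInf (g '' Set.Ioi L) := by
      have hne : (g '' Set.Ioi L).Nonempty :=
        ⟨g (L + 1), Set.mem_image_of_mem g (by simp only [Set.mem_Ioi]; linarith)⟩
      apply le_csInf hne
      rintro x ⟨v, hv, rfl⟩
      exact h v hv
    linarith
  have hv₀pos := hvpos v₀ hv₀mem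
  -- left point near L where g > j
  set K := max j 0 + 1 with hKdef
  have hK : 0 < K := by positivity
  have hjK : j < K := by
    have := le_max_left j 0; simp [hKdef]; linarith
  have hcpos : 0 < |c| := abs_pos.mpr hc
  have hsq : 0 < Real.sqrt (2 * K) := Real.sqrt_pos.mpr (by linarith)
  set ε := min ((v₀ - L) / 2) (|c| / Real.sqrt (2 * K)) with hεdef
  have hεpos : 0 < ε := by
    apply lt_min
    · have : L < v₀ := hv₀mem; linarith
    · positivity
  have hεlt : L + ε < v₀ := by
    have h1 : ε ≤ (v₀ - L) / 2 := min_le_left _ _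
    have : L < v₀ := hv₀mem
    linarith
  set vL := L + ε with hvLdef
  have hvLmem : vL ∈ Set.Ioi L := by simp [hvLdef]; linarith
  have hvLj : j < g vL := by
    rw [hg]
    have hd : m * vL - a ^ 2 = m * ε := by rw [hvLdef, mul_add, hmL]; ring
    have hterm1 : 0 < m * (1 + vL ^ 2) / vL := by
      apply div_pos
      · have := hvpos vL hvLmem; nlinarith
      · exact hvpos vL hvLmem
    have hε2 : ε ≤ |c| / Real.sqrt (2 * K) := min_le_right _ _
    have hεsq : ε ^ 2 ≤ c ^ 2 / (2 * K) := by
      have h1 : ε ^ 2 ≤ (|c| / Real.sqrt (2 * K)) ^ 2 := by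
        apply pow_le_pow_left₀ (le_of_lt hεpos) hε2
      have h2 : (|c| / Real.sqrt (2 * K)) ^ 2 = c ^ 2 / (2 * K) := by
        rw [div_pow, sq_abs, Real.sq_sqrt (by linarith : (0:ℝ) ≤ 2 * K)]
      linarith [h1, h2.le]
    have hc2 : 2 * K * ε ^ 2 ≤ c ^ 2 := by
      have := (le_div_iff₀ (by linarith : (0:ℝ) < 2 * K)).mp hεsq
      nlinarith
    have hterm2 : K ≤ 1 / 2 * (m * c / (m * vL - a ^ 2)) ^ 2 := by
      rw [hd]
      have hme : (0:ℝ) < m * ε := by positivity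
      have heq1 : (m * c / (m * ε)) ^ 2 = c ^ 2 / ε ^ 2 := by
        rw [div_pow, mul_pow, mul_pow]
        rw [mul_div_mul_left _ _ (by positivity : m ^ 2 ≠ 0)]
      have heq2 : 1 / 2 * (c ^ 2 / ε ^ 2) = c ^ 2 / (2 * ε ^ 2) := by ring
      rw [heq1, heq2, le_div_iff₀ (by positivity)]
      nlinarith
    linarith
  -- right point where g > j
  set vR := max (v₀ + 1) ((j + 1) / m) with hvRdef
  have hvRmem : vR ∈ Set.Ioi L := by
    simp only [Set.mem_Ioi]
    have : v₀ + 1 ≤ vR := le_max_left _ _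
    have : L < v₀ := hv₀mem
    linarith [le_max_left (v₀ + 1) ((j + 1) / m)]
  have hvRpos := hvpos vR hvRmem
  have hv₀vR : v₀ < vR := by
    have := le_max_left (v₀ + 1) ((j + 1) / m); linarith
  have hvRj : j < g vR := by
    rw [hg]
    have h1 : m * vR ≤ m * (1 + vR ^ 2) / vR := by
      rw [le_div_iff₀ hvRpos]; nlinarith
    have h2 : (0:ℝ) ≤ 1 / 2 * (m * c / (m * vR - a ^ 2)) ^ 2 := by positivity
    have h3 : j + 1 ≤ m * vR := by
      have h4 : (j + 1) / m ≤ vR := le_max_right _ _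
      have h5 := (div_le_iff₀ hm).mp h4
      linarith
    linarith
  -- IVT on the left
  have hsubL : Set.Icc vL v₀ ⊆ Set.Ioi L := fun x hx => lt_of_lt_of_le hvLmem hx.1
  have hIVT1 := intermediate_value_Icc' (le_of_lt hεlt : vL ≤ v₀) (hcont.mono hsubL)
  obtain ⟨v₁, hv₁Icc, hv₁⟩ := hIVT1 ⟨le_of_lt hv₀, le_of_lt hvLj⟩
  -- IVT on the right
  have hsubR : Set.Icc v₀ vR ⊆ Set.Ioi L := fun x hx => lt_of_lt_of_le hv₀mem hx.1
  have hIVT2 := intermediate_value_Icc (le_of_lt hv₀vR) (hcont.mono hsubR)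
  obtain ⟨v₂, hv₂Icc, hv₂⟩ := hIVT2 ⟨le_of_lt hv₀, le_of_lt hvRj⟩
  refine ⟨v₁, hsubL hv₁Icc, v₂, hsubR hv₂Icc, ?_, hv₁, hv₂⟩
  have h1 : v₁ < v₀ := lt_of_le_of_ne hv₁Icc.2 (fun h => by rw [h] at hv₁; linarith)
  have h2 : v₀ < v₂ := lt_of_le_of_ne hv₂Icc.1 (fun h => by rw [← h] at hv₂; linarith)
  exact ne_of_lt (lt_trans h1 h2)
end

section
/- For a slow parallel isothermal MHD shock with ρ⁻ = 1 and ρ⁺ = (a² + 2)/(a² + 1), the 5×5 determinant Δ(0,1) = det(R⁻, J, R⁺) vanishes, where R⁻ = (1, √ρ⁺, −i√((a² − ρ⁺)(a²/ρ⁺ − 1/(1 − ρ⁺))), a, 0)ᵀ, J = (0,0,i,0,0)ᵀ, and R⁺ is the 5×3 matrix with columns (√ρ⁺, 2, 0, 0, 0)ᵀ, (a(ρ⁺−1), 0, 0, 2, 0)ᵀ, (0, 0, −a√ρ⁺, 0, 1)ᵀ. In fact Δ(0,1) = 2i[ρ⁺(a² + 1) − (a² + 2)]. -/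
open Matrix Complex

/-- For a slow parallel isothermal MHD shock with ρ⁻ = 1 and
ρ⁺ = (a²+2)/(a²+1), the Lopatinski determinant Δ(0,1) = det(R⁻, J, R⁺)
equals 2i[ρ⁺(a²+1) − (a²+2)] and hence vanishes. -/
theorem stmt_9 (a ρp : ℝ) (ha : 0 < a) (hρp : ρp = (a ^ 2 + 2) / (a ^ 2 + 1))
    (M : Matrix (Fin 5) (Fin 5) ℂ)
    (hM : M = !![
      (1 : ℂ), 0, (Real.sqrt ρp : ℂ), (a : ℂ) * ((ρp : ℂ) - 1), 0;
      (Real.sqrt ρp : ℂ), 0, 2, 0, 0;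
      -Complex.I * (Real.sqrt ((a ^ 2 - ρp) * (a ^ 2 / ρp - 1 / (1 - ρp))) : ℂ),
        Complex.I, 0, 0, -(a : ℂ) * (Real.sqrt ρp : ℂ);
      (a : ℂ), 0, 0, 2, 0;
      0, 0, 0, 0, 1]) :
    M.det = 2 * Complex.I * ((ρp : ℂ) * ((a : ℂ) ^ 2 + 1) - ((a : ℂ) ^ 2 + 2)) ∧
    M.det = 0 := by
  have hρ0 : (0:ℝ) ≤ ρp := by
    rw [hρp]; positivity
  have hs : (Real.sqrt ρp : ℂ) * (Real.sqrt ρp : ℂ) = (ρp : ℂ) := by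
    rw [← Complex.ofReal_mul, Real.mul_self_sqrt hρ0]
  have hdet : M.det = 2 * Complex.I * ((ρp : ℂ) * ((a : ℂ) ^ 2 + 1) - ((a : ℂ) ^ 2 + 2)) := by
    subst hM
    simp [Matrix.det_succ_row_zero, Fin.sum_univ_succ, Fin.succAbove]
    ring_nf
    rw [show ((Real.sqrt ρp : ℂ))^2 = (Real.sqrt ρp : ℂ) * (Real.sqrt ρp : ℂ) by ring, hs]
    ring
  refine ⟨hdet, ?_⟩
  rw [hdet]
  have h1 : ((a:ℝ) ^ 2 + 1) ≠ 0 := by positivity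
  have : (ρp : ℂ) * ((a : ℂ) ^ 2 + 1) = ((a : ℂ) ^ 2 + 2) := by
    have h1c : ((a:ℂ) ^ 2 + 1) ≠ 0 := by
      intro h; apply h1; exact_mod_cast h
    rw [hρp]; push_cast
    rw [div_mul_eq_mul_div, mul_div_assoc, div_self h1c, mul_one]
  rw [this]; ring
end
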